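/- arXiv:2008.00463 — 2 statements merged into one kernel-verified Lean document; each statement's English description precedes it below -/
import Mathlib

section
/- Define the full joint J(x,u) := Π_i p_i(u_i)·1[f_i(u_i)(x↾pa(i)) = x_i] over (x,u) ∈ (Π_i X_i) × (Π_i U_i). Then for every i ∈ {0,…,n−1}, every u* ∈ U_i and every parent assignment π ∈ Π_{j∈pa(i)} X_j, one has Σ_{(x,u) : u_i = u*, x↾pa(i) = π} J(x,u) = p_i(u*) · Q_{pa(i)}(π). (Each exogenous variable U_i is independent of the endogenous parents of its child X_i; this is the d-separation step used in the proof of the Markovian identification theorem.) -/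
open Finset
open scoped Classical

variable {n : ℕ}

/-- Restriction of a joint endogenous configuration `x` to the coordinates in `S`. -/
def restr {X : Fin n → Type} (S : Finset (Fin n)) (x : ∀ i, X i) : ∀ j : S, X j :=
  fun j => x j

/-- Marginal of `R` over the coordinates in `S`. -/
noncomputable def marg {X : Fin n → Type} [∀ i, Fintype (X i)]
    (R : (∀ i, X i) → ℝ) (S : Finset (Fin n)) (v : ∀ j : S, X j) : ℝ :=
  ∑ x : ∀ i, X i, if restr S x = v then R x else 0

/-- Conditional probability `R(x_i = a | S = v)`. -/
noncomputable def cpr {X : Fin n → Type} [∀ i, Fintype (X i)]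
    (R : (∀ i, X i) → ℝ) (i : Fin n) (S : Finset (Fin n)) (a : X i) (v : ∀ j : S, X j) : ℝ :=
  (∑ x : ∀ i, X i, if x i = a ∧ restr S x = v then R x else 0) / marg R S v

/-- The unique solution of the structural equations for exogenous input `u`. -/
def solve {X U : Fin n → Type} (pa : Fin n → Finset (Fin n))
    (hpa : ∀ i, ∀ j ∈ pa i, j < i)
    (f : ∀ i, U i → (∀ j : pa i, X j) → X i)
    (u : ∀ i, U i) : ∀ i, X i
  | i => f i (u i) (fun j => solve pa hpa f u j)
termination_by i => (i : ℕ)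
decreasing_by exact hpa i j j.2

lemma solve_eq {X U : Fin n → Type} (pa : Fin n → Finset (Fin n))
    (hpa : ∀ i, ∀ j ∈ pa i, j < i)
    (f : ∀ i, U i → (∀ j : pa i, X j) → X i)
    (u : ∀ i, U i) (i : Fin n) :
    solve pa hpa f u i = f i (u i) (fun j => solve pa hpa f u j) := by
  rw [solve]

lemma solve_congr {X U : Fin n → Type} (pa : Fin n → Finset (Fin n))
    (hpa : ∀ i, ∀ j ∈ pa i, j < i)
    (f : ∀ i, U i → (∀ j : pa i, X j) → X i)
    (u u' : ∀ i, U i) :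
    ∀ m : ℕ, ∀ i : Fin n, (i : ℕ) < m → (∀ k : Fin n, k ≤ i → u k = u' k) →
      solve pa hpa f u i = solve pa hpa f u' i := by
  intro m
  induction m with
  | zero => intro i hi; omega
  | succ m ih =>
    intro i hi h
    rw [solve_eq, solve_eq, h i le_rfl]
    congr 1
    funext j
    exact ih j (by have := hpa i j j.2; omega)
      (fun k hk => h k (le_of_lt (lt_of_le_of_lt hk (hpa i j j.2))))

lemma J_eq_solve {X U : Fin n → Type} [∀ i, Fintype (X i)]
    (pa : Fin n → Finset (Fin n))
    (hpa : ∀ i, ∀ j ∈ pa i, j < i)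
    (f : ∀ i, U i → (∀ j : pa i, X j) → X i)
    (p : ∀ i, U i → ℝ) (x : ∀ i, X i) (u : ∀ i, U i) :
    (∏ k, p k (u k) * (if f k (u k) (restr (pa k) x) = x k then (1 : ℝ) else 0))
      = (∏ k, p k (u k)) * (if x = solve pa hpa f u then 1 else 0) := by
  by_cases hx : x = solve pa hpa f u
  · subst hx
    rw [if_pos rfl, Finset.prod_mul_distrib]
    congr 1
    rw [Finset.prod_eq_one]
    intro k _
    rw [if_pos]
    exact (solve_eq pa hpa f u k).symm
  · rw [if_neg hx, mul_zero]
    have hne : (univ.filter fun k => x k ≠ solve pa hpa f u k).Nonempty := by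
      by_contra h
      apply hx
      funext k
      by_contra hk
      exact h ⟨k, Finset.mem_filter.mpr ⟨Finset.mem_univ k, hk⟩⟩
    set k0 := (univ.filter fun k => x k ≠ solve pa hpa f u k).min' hne with hk0
    have hk0mem := (univ.filter fun k => x k ≠ solve pa hpa f u k).min'_mem hne
    have hk0ne : x k0 ≠ solve pa hpa f u k0 := (Finset.mem_filter.mp hk0mem).2
    apply Finset.prod_eq_zero (Finset.mem_univ k0)
    have hres : restr (pa k0) x = (fun j : pa k0 => solve pa hpa f u j.1) := by
      funext j
      show x j.1 = _
      by_contra hj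
      have : j.1 ∈ univ.filter fun k => x k ≠ solve pa hpa f u k :=
        Finset.mem_filter.mpr ⟨Finset.mem_univ _, hj⟩
      have := Finset.min'_le _ _ this
      exact absurd (lt_of_le_of_lt this (hpa k0 j j.2)) (lt_irrefl _)
    rw [hres, ← solve_eq pa hpa f u k0, if_neg (fun h => hk0ne h.symm), mul_zero]

/-- d-separation step: in a Markovian PSCM, each exogenous variable
`U_i` is independent of the endogenous parents of its child `X_i`:
the joint mass of `{U_i = u*, Pa(X_i) = π}` factorizes as `p_i(u*) · Q_{pa(i)}(π)`. -/
theorem exogenous_indep_endogenous_parents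
    (X U : Fin n → Type)
    [∀ i, Fintype (X i)] [∀ i, Nonempty (X i)]
    [∀ i, Fintype (U i)] [∀ i, Nonempty (U i)]
    (pa : Fin n → Finset (Fin n)) (hpa : ∀ i, ∀ j ∈ pa i, j < i)
    (f : ∀ i, U i → (∀ j : pa i, X j) → X i)
    (p : ∀ i, U i → ℝ)
    (hp0 : ∀ i u, 0 ≤ p i u) (hp1 : ∀ i, ∑ u, p i u = 1)
    (J : (∀ i, X i) → (∀ i, U i) → ℝ)
    (hJ : ∀ x u, J x u = ∏ i, p i (u i) *
        (if f i (u i) (restr (pa i) x) = x i then (1 : ℝ) else 0))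
    (Q : (∀ i, X i) → ℝ)
    (hQ : ∀ x, Q x = ∑ u : ∀ i, U i, J x u)
    (i : Fin n) (ustar : U i) (π : ∀ j : pa i, X j) :
    (∑ x : ∀ i, X i, ∑ u : ∀ i, U i,
        if u i = ustar ∧ restr (pa i) x = π then J x u else 0)
      = p i ustar * marg Q (pa i) π := by
  set g := solve pa hpa f with hg
  set P : (∀ k, U k) → ℝ := fun u => ∏ k, p k (u k) with hP
  have hJ' : ∀ x u, J x u = P u * (if x = g u then 1 else 0) := by
    intro x u
    rw [hJ x u, J_eq_solve pa hpa f p x u]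
  have collapse : ∀ (C : (∀ k, X k) → (∀ k, U k) → Prop),
      (∑ x : ∀ k, X k, ∑ u : ∀ k, U k, if C x u then J x u else 0)
        = ∑ u : ∀ k, U k, if C (g u) u then P u else 0 := by
    intro C
    rw [Finset.sum_comm]
    apply Finset.sum_congr rfl
    intro u _
    have h1 : ∀ x : ∀ k, X k, (if C x u then J x u else 0)
        = if x = g u then (if C x u then P u else 0) else 0 := by
      intro x
      rw [hJ' x u]
      by_cases hx : x = g u <;> by_cases hc : C x u <;> simp [hx, hc]
    rw [Finset.sum_congr rfl (fun x _ => h1 x), Finset.sum_ite_eq' univ (g u)]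
    simp
  have step1 : (∑ x : ∀ i, X i, ∑ u : ∀ i, U i,
        if u i = ustar ∧ restr (pa i) x = π then J x u else 0)
      = ∑ u : ∀ k, U k, if u i = ustar ∧ restr (pa i) (g u) = π then P u else 0 := by
    have h := collapse (fun x u => u i = ustar ∧ restr (pa i) x = π)
    convert h using 2 with u _
    · congr!
    · congr!
  have step2 : marg Q (pa i) π
      = ∑ u : ∀ k, U k, if restr (pa i) (g u) = π then P u else 0 := by
    have h := collapse (fun x _ => restr (pa i) x = π)
    refine Eq.trans ?_ (h.trans ?_)
    swap
    · congr!
    unfold marg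
    apply Finset.sum_congr rfl
    intro x _
    rw [hQ x]
    by_cases hc : restr (pa i) x = π <;> simp [hc]
  rw [step1, step2]
  classical
  set e := Equiv.piSplitAt i U with he
  have hcoord : ∀ (v : U i) (w : ∀ j : {j // j ≠ i}, U j) (k : Fin n), k ≠ i →
      e.symm (v, w) k = e.symm (ustar, w) k := by
    intro v w k hk
    simp [he, Equiv.piSplitAt_symm_apply, dif_neg hk]
  have hucoord : ∀ (v : U i) (w : ∀ j : {j // j ≠ i}, U j), e.symm (v, w) i = v := by
    intro v w; simp [he, Equiv.piSplitAt_symm_apply]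
  have hAinv : ∀ (v : U i) (w : ∀ j : {j // j ≠ i}, U j),
      restr (pa i) (g (e.symm (v, w))) = restr (pa i) (g (e.symm (ustar, w))) := by
    intro v w
    funext j
    show g (e.symm (v, w)) j.1 = g (e.symm (ustar, w)) j.1
    apply solve_congr pa hpa f _ _ n j.1 j.1.isLt
    intro k hk
    apply hcoord
    intro hki
    have hji := hpa i j.1 j.2
    have hki' : k < i := lt_of_le_of_lt hk hji
    subst hki
    exact absurd hki' (lt_irrefl _)
  set A' : (∀ j : {j // j ≠ i}, U j) → Prop :=
    fun w => restr (pa i) (g (e.symm (ustar, w))) = π with hA'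
  set C : (∀ j : {j // j ≠ i}, U j) → ℝ :=
    fun w => ∏ k ∈ ({i}ᶜ : Finset (Fin n)), p k (e.symm (ustar, w) k) with hC
  have hPsplit : ∀ (v : U i) (w : ∀ j : {j // j ≠ i}, U j),
      P (e.symm (v, w)) = p i v * C w := by
    intro v w
    show (∏ k, p k (e.symm (v, w) k)) = p i v * C w
    rw [Fintype.prod_eq_mul_prod_compl i, hucoord]
    congr 1
    apply Finset.prod_congr rfl
    intro k hk
    rw [hcoord v w k (by simpa using hk)]
  have expand : ∀ F : (∀ k, U k) → ℝ,
      (∑ u : ∀ k, U k, F u) = ∑ v : U i, ∑ w : ∀ j : {j // j ≠ i}, U j, F (e.symm (v, w)) := by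
    intro F
    rw [← Equiv.sum_comp e.symm F, Fintype.sum_prod_type]
  rw [expand, expand]
  have hLterm : ∀ (v : U i) (w : ∀ j : {j // j ≠ i}, U j),
      (if e.symm (v, w) i = ustar ∧ restr (pa i) (g (e.symm (v, w))) = π
        then P (e.symm (v, w)) else 0)
      = if v = ustar then (if A' w then p i ustar * C w else 0) else 0 := by
    intro v w
    rw [hucoord, hAinv, hPsplit]
    by_cases hv : v = ustar
    · subst hv; by_cases hw : A' w <;> simp [hw, hA']
    · simp [hv]
  have hRterm : ∀ (v : U i) (w : ∀ j : {j // j ≠ i}, U j),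
      (if restr (pa i) (g (e.symm (v, w))) = π then P (e.symm (v, w)) else 0)
      = p i v * (if A' w then C w else 0) := by
    intro v w
    rw [hAinv, hPsplit]
    by_cases hw : A' w <;> simp [hw, hA', mul_comm]
  calc (∑ v : U i, ∑ w : ∀ j : {j // j ≠ i}, U j,
          if e.symm (v, w) i = ustar ∧ restr (pa i) (g (e.symm (v, w))) = π
            then P (e.symm (v, w)) else 0)
      = ∑ v : U i, if v = ustar then (∑ w, if A' w then p i ustar * C w else 0) else 0 := by
        apply Finset.sum_congr rfl
        intro v _
        rw [Finset.sum_congr rfl (fun w _ => hLterm v w)]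
        by_cases hv : v = ustar <;> simp [hv]
    _ = ∑ w, if A' w then p i ustar * C w else 0 := by
        rw [Finset.sum_ite_eq' univ ustar]; simp
    _ = p i ustar * ∑ w, if A' w then C w else 0 := by
        rw [Finset.mul_sum]
        apply Finset.sum_congr rfl
        intro w _
        by_cases hw : A' w <;> simp [hw]
    _ = p i ustar * ∑ v : U i, ∑ w : ∀ j : {j // j ≠ i}, U j,
          if restr (pa i) (g (e.symm (v, w))) = π then P (e.symm (v, w)) else 0 := by
        congr 1
        calc (∑ w, if A' w then C w else 0)
            = (∑ v : U i, p i v) * (∑ w, if A' w then C w else 0) := by rw [hp1, one_mul]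
          _ = ∑ v : U i, ∑ w, p i v * (if A' w then C w else 0) :=
              Finset.sum_mul_sum _ _ _ _
          _ = _ := Finset.sum_congr rfl fun v _ => Finset.sum_congr rfl fun w _ =>
              (hRterm v w).symm
end

section
/- Suppose the induced endogenous distribution Q is strictly positive. Then for every e ∈ E and every assignment v ∈ Π_{j∈W_e} X_j one has Σ_{u∈U_e} q_e(u) · Π_{k=1}^{m_e} 1[f_{i_k}(u)(v↾pa(i_k)) = v_{i_k}] = Π_{k=1}^{m_e} Q(x_{i_k} = v_{i_k} ∣ T_k^e = v↾T_k^e), where T_k^e := {i_1,…,i_{k−1}} ∪ pa(i_1) ∪ … ∪ pa(i_k). (The mixture over an exogenous variable of the product of its children's structural-equation CPTs equals the chain-rule product of conditionals of the induced endogenous distribution.) -/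
open Finset
open scoped Classical

variable {n : ℕ}

/-- Restriction along an inclusion of index sets. -/
def restr2 {X : Fin n → Type} {S T : Finset (Fin n)} (h : S ⊆ T) (v : ∀ j : T, X j) :
    ∀ j : S, X j :=
  fun j => v ⟨j, h j.2⟩

/-- The endogenous children of the exogenous variable `e`. -/
noncomputable def childSet {E : Type} [Fintype E] (c : Fin n → E) (e : E) : Finset (Fin n) :=
  univ.filter (fun i => c i = e)

/-- Enumeration `i_1 < … < i_{m_e}` of the children of `e` in increasing order. -/
noncomputable def ch {E : Type} [Fintype E] (c : Fin n → E) (e : E) :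
    Fin (childSet c e).card → Fin n :=
  fun k => (childSet c e).orderEmbOfFin rfl k

lemma ch_mem_childSet {E : Type} [Fintype E] (c : Fin n → E) (e : E)
    (k : Fin (childSet c e).card) : ch c e k ∈ childSet c e :=
  Finset.orderEmbOfFin_mem _ rfl k

lemma c_ch {E : Type} [Fintype E] (c : Fin n → E) (e : E)
    (k : Fin (childSet c e).card) : c (ch c e k) = e := by
  have h := ch_mem_childSet c e k
  simpa [childSet] using h

/-- Cast of a state of `U e` to a state of the exogenous parent of the `k`-th child of `e`. -/
noncomputable def uCast {E : Type} [Fintype E] (U : E → Type) (c : Fin n → E) (e : E)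
    (k : Fin (childSet c e).card) (u : U e) : U (c (ch c e k)) :=
  cast (congrArg U (c_ch c e k).symm) u

/-- `W_e := {i_1,…,i_{m_e}} ∪ pa(i_1) ∪ … ∪ pa(i_{m_e})`. -/
noncomputable def Wset {E : Type} [Fintype E] (pa : Fin n → Finset (Fin n))
    (c : Fin n → E) (e : E) : Finset (Fin n) :=
  childSet c e ∪ (childSet c e).biUnion pa

/-- `T_k^e := {i_1,…,i_{k−1}} ∪ pa(i_1) ∪ … ∪ pa(i_k)` (indices `k` are 0-based here). -/
noncomputable def Tset {E : Type} [Fintype E] (pa : Fin n → Finset (Fin n))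
    (c : Fin n → E) (e : E) (k : Fin (childSet c e).card) : Finset (Fin n) :=
  ((univ.filter (fun l => l < k)).image (ch c e)) ∪
    ((univ.filter (fun l => l ≤ k)).biUnion (fun l => pa (ch c e l)))

lemma ch_mem_W {E : Type} [Fintype E] (pa : Fin n → Finset (Fin n)) (c : Fin n → E)
    (e : E) (k : Fin (childSet c e).card) : ch c e k ∈ Wset pa c e :=
  Finset.mem_union_left _ (ch_mem_childSet c e k)

lemma pa_subset_W {E : Type} [Fintype E] (pa : Fin n → Finset (Fin n)) (c : Fin n → E)
    (e : E) (k : Fin (childSet c e).card) : pa (ch c e k) ⊆ Wset pa c e :=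
  fun j hj => Finset.mem_union_right _
    (Finset.mem_biUnion.2 ⟨ch c e k, ch_mem_childSet c e k, hj⟩)

lemma T_subset_W {E : Type} [Fintype E] (pa : Fin n → Finset (Fin n)) (c : Fin n → E)
    (e : E) (k : Fin (childSet c e).card) : Tset pa c e k ⊆ Wset pa c e := by
  intro j hj
  rcases Finset.mem_union.1 hj with h | h
  · rcases Finset.mem_image.1 h with ⟨l, _, rfl⟩
    exact ch_mem_W pa c e l
  · rcases Finset.mem_biUnion.1 h with ⟨l, _, hl⟩
    exact pa_subset_W pa c e l hl

/-- Full joint `J(x,u)` of a quasi-Markovian PSCM. -/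
noncomputable def Jfun {E : Type} [Fintype E] {X : Fin n → Type} {U : E → Type}
    [∀ i, Fintype (X i)]
    (pa : Fin n → Finset (Fin n)) (c : Fin n → E)
    (f : ∀ i, U (c i) → (∀ j : pa i, X j) → X i)
    (q : ∀ e, U e → ℝ) (x : ∀ i, X i) (u : ∀ e, U e) : ℝ :=
  (∏ e, q e (u e)) *
    ∏ i, (if f i (u (c i)) (restr (pa i) x) = x i then (1 : ℝ) else 0)

/-- Induced endogenous distribution `Q(x) := Σ_u J(x,u)`. -/
noncomputable def Qfun {E : Type} [Fintype E] {X : Fin n → Type} {U : E → Type}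
    [∀ i, Fintype (X i)] [∀ e, Fintype (U e)]
    (pa : Fin n → Finset (Fin n)) (c : Fin n → E)
    (f : ∀ i, U (c i) → (∀ j : pa i, X j) → X i)
    (q : ∀ e, U e → ℝ) (x : ∀ i, X i) : ℝ :=
  ∑ u : ∀ e, U e, Jfun pa c f q x u


section Aux

variable {X : Fin n → Type} [∀ i, Fintype (X i)]

/-- Extend a partial assignment on `S` to a full configuration, using `x` off `S`. -/
noncomputable def extOn (S : Finset (Fin n)) (w : ∀ j : S, X j) (x : ∀ i, X i) : ∀ i, X i :=
  fun i => if h : i ∈ S then w ⟨i, h⟩ else x i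

lemma restr_extOn (S : Finset (Fin n)) (w : ∀ j : S, X j) (x : ∀ i, X i) :
    restr S (extOn S w x) = w := by
  funext j
  simp only [restr, extOn]
  exact dif_pos j.2

lemma restr2_restr {S T : Finset (Fin n)} (h : S ⊆ T) (x : ∀ i, X i) :
    restr2 h (restr T x) = restr S x := rfl

lemma restr_eq_iff {S : Finset (Fin n)} (x y : ∀ i, X i) :
    restr S x = restr S y ↔ ∀ i ∈ S, x i = y i := by
  constructor
  · intro h i hi
    exact congrFun h ⟨i, hi⟩
  · intro h
    funext j
    exact h j j.2

/-- Grouping: marginal over `T` is the sum of marginals over `S ⊇ T` pinned to agree on `T`. -/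
lemma marg_group {T S : Finset (Fin n)} (h : T ⊆ S) (R : (∀ i, X i) → ℝ) (v : ∀ j : T, X j) :
    marg R T v = ∑ w : ∀ j : S, X j, if restr2 h w = v then marg R S w else 0 := by
  unfold marg
  rw [show (∑ w : ∀ j : S, X j, if restr2 h w = v then (∑ x : ∀ i, X i, if restr S x = w then R x else 0) else 0)
      = ∑ w : ∀ j : S, X j, ∑ x : ∀ i, X i, (if restr2 h w = v then (if restr S x = w then R x else 0) else 0) by
    apply Finset.sum_congr rfl; intro w _
    split <;> simp]
  rw [Finset.sum_comm]
  apply Finset.sum_congr rfl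
  intro y _
  rw [show (∑ w : ∀ j : S, X j, if restr2 h w = v then (if restr S y = w then R y else 0) else 0)
      = ∑ w : ∀ j : S, X j, if w = restr S y then (if restr2 h w = v then R y else 0) else 0 by
    apply Finset.sum_congr rfl; intro w _
    by_cases h1 : w = restr S y
    · subst h1; simp
    · rw [if_neg (show ¬ restr S y = w from fun hh => h1 hh.symm), if_neg h1, ite_self]]
  rw [Fintype.sum_ite_eq' (restr S y) (fun w => if restr2 h w = v then R y else 0)]
  rfl

/-- Summing over assignments on `insert j₀ S` with pinned value at `j₀`. -/
lemma sum_pin {S : Finset (Fin n)} {j₀ : Fin n} (hj : j₀ ∉ S) (b : X j₀)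
    (g : (∀ j : S, X j) → ℝ) :
    (∑ w : ∀ j : (insert j₀ S : Finset (Fin n)), X j,
      if w ⟨j₀, Finset.mem_insert_self _ _⟩ = b then g (restr2 (Finset.subset_insert j₀ S) w) else 0)
      = ∑ w' : ∀ j : S, X j, g w' := by
  rw [← Finset.sum_filter]
  apply Finset.sum_nbij' (i := fun w => restr2 (Finset.subset_insert j₀ S) w)
    (j := fun w' => fun j => if h : (j : Fin n) ∈ S then w' ⟨j, h⟩ else
      cast (congrArg X (by
        have := j.2
        rcases Finset.mem_insert.1 this with h1 | h1
        · exact h1.symm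
        · exact absurd h1 h)) b)
  · intro w _; exact Finset.mem_univ _
  · intro w' _
    simp only [Finset.mem_filter, Finset.mem_univ, true_and]
    exact dif_neg hj
  · intro w hw
    simp only [Finset.mem_filter, Finset.mem_univ, true_and] at hw
    funext j
    by_cases h1 : (j : Fin n) ∈ S
    · simp only [dif_pos h1]
      rfl
    · simp only [dif_neg h1]
      have hj0 : (j : Fin n) = j₀ := by
        rcases Finset.mem_insert.1 j.2 with h2 | h2
        · exact h2
        · exact absurd h2 h1
      have hjj : j = ⟨j₀, Finset.mem_insert_self _ _⟩ := Subtype.ext hj0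
      subst hjj
      rw [hw]
      exact eq_of_heq (cast_heq _ b)
  · intro w' _
    funext j
    exact dif_pos j.2
  · intro w _; rfl

end Aux

section Main

variable {E : Type} [Fintype E] {X : Fin n → Type} {U : E → Type}
  [∀ i, Fintype (X i)] [∀ e, Fintype (U e)]
  (pa : Fin n → Finset (Fin n)) (c : Fin n → E)
  (f : ∀ i, U (c i) → (∀ j : pa i, X j) → X i) (q : ∀ e, U e → ℝ)

/-- Plain structural-equation indicator. -/
noncomputable def ind (i : Fin n) (u : U (c i)) (y : ∀ i, X i) : ℝ :=
  if f i u (restr (pa i) y) = y i then 1 else 0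

/-- Indicator fed by a state of `U e`, trivial when `e` is not the exogenous parent. -/
noncomputable def indC (e : E) (i : Fin n) (u : U e) (y : ∀ i, X i) : ℝ :=
  if h : c i = e then ind pa c f i (cast (congrArg U h.symm) u) y else 1

lemma indC_self (i : Fin n) (u : U (c i)) (y : ∀ i, X i) :
    indC pa c f (c i) i u y = ind pa c f i u y := by
  unfold indC
  rw [dif_pos rfl]
  have : cast (congrArg U (Eq.symm (rfl : c i = c i))) u = u := eq_of_heq (cast_heq _ _)
  rw [this]

/-- The first `m` variables, as a finset. -/
def Sfin (m : ℕ) : Finset (Fin n) := univ.filter (fun i => i.val < m)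

/-- Exogenous-factor function: mixture over `U e` of the product of the indicators of the
children of `e` among the first `m` variables. -/
noncomputable def Gm (e : E) (m : ℕ) (y : ∀ i, X i) : ℝ :=
  ∑ u : U e, q e u * ∏ i : Fin n, (if i.val < m ∧ c i = e then indC pa c f e i u y else 1)

/-- Joint mixture over all exogenous variables of products of indicators of the first `m`
variables. -/
noncomputable def SF (m : ℕ) (y : ∀ i, X i) : ℝ :=
  ∑ u : ∀ e, U e, (∏ e, q e (u e)) * ∏ i : Fin n, (if i.val < m then ind pa c f i (u (c i)) y else 1)

lemma SF_eq_prod_Gm (m : ℕ) (y : ∀ i, X i) :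
    SF pa c f q m y = ∏ e, Gm pa c f q e m y := by
  unfold Gm
  rw [Fintype.prod_sum (fun e u => q e u * ∏ i : Fin n,
    (if i.val < m ∧ c i = e then indC pa c f e i u y else 1))]
  unfold SF
  apply Finset.sum_congr rfl
  intro u _
  rw [Finset.prod_mul_distrib, Finset.prod_comm]
  congr 1
  apply Finset.prod_congr rfl
  intro i _
  by_cases him : i.val < m
  · rw [if_pos him]
    rw [Finset.prod_eq_single (c i)]
    · rw [if_pos ⟨him, rfl⟩, indC_self]
    · intro e _ he
      rw [if_neg (by tauto)]
    · intro h; exact absurd (Finset.mem_univ _) h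
  · rw [if_neg him]
    symm
    apply Finset.prod_eq_one
    intro e _
    rw [if_neg (by tauto)]

lemma SF_n {m : ℕ} (hm : n ≤ m) (y : ∀ i, X i) : SF pa c f q m y = Qfun pa c f q y := by
  unfold SF Qfun Jfun
  apply Finset.sum_congr rfl
  intro u _
  congr 1
  apply Finset.prod_congr rfl
  intro i _
  rw [if_pos (lt_of_lt_of_le i.isLt hm)]
  rfl

lemma marg_univ (R : (∀ i, X i) → ℝ) (y : ∀ i, X i) :
    marg R univ (restr univ y) = R y := by
  unfold marg
  rw [Finset.sum_eq_single y]
  · rw [if_pos rfl]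
  · intro x _ hxy
    rw [if_neg]
    intro h
    exact hxy (funext fun i => congrFun h ⟨i, Finset.mem_univ i⟩)
  · intro h; exact absurd (Finset.mem_univ _) h

lemma marg_insert_sum {S : Finset (Fin n)} {j : Fin n} (hj : j ∉ S)
    (R : (∀ i, X i) → ℝ) (y : ∀ i, X i) :
    marg R S (restr S y) =
      ∑ a : X j, marg R (insert j S) (restr (insert j S) (Function.update y j a)) := by
  unfold marg
  rw [Finset.sum_comm]
  apply Finset.sum_congr rfl
  intro x _
  have key : ∀ a : X j, (restr (insert j S) x = restr (insert j S) (Function.update y j a)) ↔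
      (x j = a ∧ restr S x = restr S y) := by
    intro a
    rw [restr_eq_iff, restr_eq_iff]
    rw [Finset.forall_mem_insert]
    constructor
    · rintro ⟨h1, h2⟩
      refine ⟨by simpa using h1, fun i hi => ?_⟩
      have := h2 i hi
      rwa [Function.update_of_ne (fun hh : i = j => hj (hh ▸ hi))] at this
    · rintro ⟨h1, h2⟩
      refine ⟨by simpa using h1, fun i hi => ?_⟩
      rw [Function.update_of_ne (fun hh : i = j => hj (hh ▸ hi))]
      exact h2 i hi
  simp_rw [key]
  by_cases hC : restr S x = restr S y
  · simp [hC]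
  · simp [hC]

end Main

section Main2

variable {E : Type} [Fintype E] {X : Fin n → Type} {U : E → Type}
  [∀ i, Fintype (X i)] [∀ e, Fintype (U e)]
  (pa : Fin n → Finset (Fin n)) (c : Fin n → E)
  (f : ∀ i, U (c i) → (∀ j : pa i, X j) → X i) (q : ∀ e, U e → ℝ)

lemma ind_congr (i : Fin n) (u : U (c i)) {y x : ∀ i, X i}
    (h1 : y i = x i) (h2 : ∀ j ∈ pa i, y j = x j) :
    ind pa c f i u y = ind pa c f i u x := by
  unfold ind
  have : restr (pa i) y = restr (pa i) x := by
    funext j; exact h2 j j.2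
  rw [this, h1]

lemma SF_succ_update (hpa : ∀ i, ∀ j ∈ pa i, j < i) {m : ℕ} (hm : m < n) (y : ∀ i, X i) :
    (∑ a : X ⟨m, hm⟩, SF pa c f q (m + 1) (Function.update y ⟨m, hm⟩ a)) = SF pa c f q m y := by
  set j : Fin n := ⟨m, hm⟩ with hjdef
  unfold SF
  rw [Finset.sum_comm]
  apply Finset.sum_congr rfl
  intro u _
  have hpaj : ∀ a : X j, restr (pa j) (Function.update y j a) = restr (pa j) y := by
    intro a
    funext i
    refine Function.update_of_ne (fun hh : (i : Fin n) = j => ?_) _ _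
    have hlt := hpa j i i.2
    rw [hh] at hlt
    exact absurd hlt (lt_irrefl j)
  have step1 : ∀ a : X j,
      (∏ i : Fin n, (if i.val < m + 1 then ind pa c f i (u (c i)) (Function.update y j a) else 1))
      = (∏ i : Fin n, (if i.val < m then ind pa c f i (u (c i)) y else 1)) *
        (if f j (u (c j)) (restr (pa j) y) = a then 1 else 0) := by
    intro a
    rw [← Finset.mul_prod_erase univ _ (Finset.mem_univ j),
        ← Finset.mul_prod_erase univ (fun i => if i.val < m then ind pa c f i (u (c i)) y else 1)
          (Finset.mem_univ j)]
    have hj1 : (if (j : Fin n).val < m + 1 then ind pa c f j (u (c j)) (Function.update y j a) else 1)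
        = if f j (u (c j)) (restr (pa j) y) = a then 1 else 0 := by
      rw [if_pos (Nat.lt_succ_self m : (j : Fin n).val < m + 1)]
      unfold ind
      rw [hpaj a, Function.update_self]
    have hj2 : (if (j : Fin n).val < m then ind pa c f j (u (c j)) y else 1) = 1 := by
      rw [if_neg (lt_irrefl m : ¬ (j : Fin n).val < m)]
    rw [hj1, hj2, one_mul, mul_comm]
    congr 1
    apply Finset.prod_congr rfl
    intro i hi
    have hij : i ≠ j := (Finset.mem_erase.1 hi).1
    have hvm : i.val ≠ m := fun hh => hij (Fin.ext hh)
    by_cases hlt : i.val < m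
    · rw [if_pos (by omega), if_pos hlt]
      apply ind_congr
      · exact Function.update_of_ne hij _ _
      · intro l hl
        exact Function.update_of_ne
          (fun hh : l = j => by
            have := hpa i l hl
            rw [hh] at this
            have : m < i.val := this
            omega) _ _
    · rw [if_neg (by omega), if_neg hlt]
  have hsum : (∑ a : X j, if f j (u (c j)) (restr (pa j) y) = a then (1:ℝ) else 0) = 1 := by
    rw [Finset.sum_ite_eq univ (f j (u (c j)) (restr (pa j) y)) (fun _ => (1:ℝ))]
    rw [if_pos (Finset.mem_univ _)]
  simp_rw [step1]
  rw [← Finset.mul_sum, ← Finset.mul_sum, hsum, mul_one]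

lemma marg_Sfin (hpa : ∀ i, ∀ j ∈ pa i, j < i) (m : ℕ) (hm : m ≤ n) (y : ∀ i, X i) :
    marg (Qfun pa c f q) (Sfin m) (restr (Sfin m) y) = SF pa c f q m y := by
  suffices H : ∀ d m', m' + d = n → ∀ y, marg (Qfun pa c f q) (Sfin m') (restr (Sfin m') y)
      = SF pa c f q m' y by
    exact H (n - m) m (by omega) y
  intro d
  induction d with
  | zero =>
    intro m' hm' y
    have hmn : m' = n := by omega
    have huniv : (Sfin m' : Finset (Fin n)) = univ := by
      ext i; simp only [Sfin, Finset.mem_filter, Finset.mem_univ, true_and]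
      exact ⟨fun _ => trivial, fun _ => lt_of_lt_of_le i.isLt (le_of_eq hmn.symm)⟩
    rw [huniv, marg_univ, SF_n pa c f q (le_of_eq hmn.symm)]
  | succ d ih =>
    intro m' hm' y
    have hmn : m' < n := by omega
    have hins : (Sfin (m' + 1) : Finset (Fin n)) = insert ⟨m', hmn⟩ (Sfin m') := by
      ext i
      simp only [Sfin, Finset.mem_filter, Finset.mem_univ, true_and, Finset.mem_insert,
        Fin.ext_iff]
      omega
    have hj : (⟨m', hmn⟩ : Fin n) ∉ Sfin m' := by simp [Sfin]
    rw [marg_insert_sum hj]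
    have : ∀ a : X ⟨m', hmn⟩,
        marg (Qfun pa c f q) (insert ⟨m', hmn⟩ (Sfin m'))
          (restr (insert ⟨m', hmn⟩ (Sfin m')) (Function.update y ⟨m', hmn⟩ a))
        = SF pa c f q (m' + 1) (Function.update y ⟨m', hmn⟩ a) := by
      intro a
      rw [← hins]
      exact ih (m' + 1) (by omega) _
    simp_rw [this]
    exact SF_succ_update pa c f q hpa hmn y

end Main2

section Main3

variable {E : Type} [Fintype E] {X : Fin n → Type} {U : E → Type}
  [∀ i, Fintype (X i)] [∀ e, Fintype (U e)]
  (pa : Fin n → Finset (Fin n)) (c : Fin n → E)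
  (f : ∀ i, U (c i) → (∀ j : pa i, X j) → X i) (q : ∀ e, U e → ℝ)

/-- Partial mixture over `U e` of the indicators of the first `k` children of `e`. -/
noncomputable def Pk (e : E) (k : ℕ) (y : ∀ i, X i) : ℝ :=
  ∑ u : U e, q e u * ∏ l : Fin (childSet c e).card,
    (if l.val < k then indC pa c f e (ch c e l) u y else 1)

lemma ch_lt_iff (e : E) (l k : Fin (childSet c e).card) :
    ch c e l < ch c e k ↔ l < k := by
  unfold ch
  exact OrderEmbedding.lt_iff_lt _

lemma ch_surj (e : E) {i : Fin n} (hi : i ∈ childSet c e) :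
    ∃ l, ch c e l = i := by
  have hmem : i ∈ Set.range ((childSet c e).orderEmbOfFin rfl) := by
    have hr := Finset.range_orderEmbOfFin (childSet c e) (rfl : (childSet c e).card = (childSet c e).card)
    rw [hr]
    exact hi
  rcases hmem with ⟨l, hl⟩
  exact ⟨l, hl⟩

lemma ch_inj (e : E) : Function.Injective (ch c e) := by
  unfold ch
  exact (Finset.orderEmbOfFin (childSet c e) rfl).injective

lemma Gm_eq_Pk (e : E) (m k : ℕ)
    (hm : ∀ i : Fin n, (i.val < m ∧ c i = e) ↔
      ∃ l : Fin (childSet c e).card, l.val < k ∧ ch c e l = i)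
    (y : ∀ i, X i) :
    Gm pa c f q e m y = Pk pa c f q e k y := by
  unfold Gm Pk
  apply Finset.sum_congr rfl
  intro u _
  congr 1
  rw [← Finset.prod_filter (fun i : Fin n => i.val < m ∧ c i = e)
    (fun i => indC pa c f e i u y)]
  rw [← Finset.prod_filter (fun l : Fin (childSet c e).card => l.val < k)
    (fun l => indC pa c f e (ch c e l) u y)]
  symm
  apply Finset.prod_bij (fun l _ => ch c e l)
  · intro l hl
    simp only [Finset.mem_filter, Finset.mem_univ, true_and] at hl ⊢
    exact (hm (ch c e l)).2 ⟨l, hl, rfl⟩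
  · intro l1 h1 l2 h2 hh
    exact ch_inj c e hh
  · intro i hi
    simp only [Finset.mem_filter, Finset.mem_univ, true_and] at hi
    rcases (hm i).1 hi with ⟨l, hl, hli⟩
    exact ⟨l, by simp only [Finset.mem_filter, Finset.mem_univ, true_and]; exact hl, hli⟩
  · intro l hl
    rfl

lemma cond_iff_lt (e : E) (k : Fin (childSet c e).card) (i : Fin n) :
    (i.val < (ch c e k).val ∧ c i = e) ↔
      ∃ l : Fin (childSet c e).card, l.val < k.val ∧ ch c e l = i := by
  constructor
  · rintro ⟨h1, h2⟩
    have hi : i ∈ childSet c e := by simp [childSet, h2]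
    rcases ch_surj c e hi with ⟨l, hl⟩
    refine ⟨l, ?_, hl⟩
    have : ch c e l < ch c e k := by rw [hl]; exact h1
    exact (ch_lt_iff c e l k).1 this
  · rintro ⟨l, hl, rfl⟩
    refine ⟨(ch_lt_iff c e l k).2 hl, c_ch c e l⟩

lemma cond_iff_le (e : E) (k : Fin (childSet c e).card) (i : Fin n) :
    (i.val < (ch c e k).val + 1 ∧ c i = e) ↔
      ∃ l : Fin (childSet c e).card, l.val < k.val + 1 ∧ ch c e l = i := by
  constructor
  · rintro ⟨h1, h2⟩
    have hi : i ∈ childSet c e := by simp [childSet, h2]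
    rcases ch_surj c e hi with ⟨l, hl⟩
    refine ⟨l, ?_, hl⟩
    have hle : ch c e l ≤ ch c e k := by
      rw [hl]
      exact Fin.le_def.2 (by omega)
    have : l ≤ k := by
      by_contra hc
      push_neg at hc
      have := (ch_lt_iff c e k l).2 hc
      exact absurd (lt_of_le_of_lt hle this) (lt_irrefl _)
    omega
  · rintro ⟨l, hl, rfl⟩
    constructor
    · rcases Nat.lt_or_ge l.val k.val with h | h
      · have := (ch_lt_iff c e l k).2 (by exact h)
        have : (ch c e l).val < (ch c e k).val := this
        omega
      · have hlk : l = k := Fin.ext (by omega)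
        rw [hlk]
        omega
    · exact c_ch c e l

lemma Gm_succ_ne (e' e : E) (hne : e' ≠ e) (k : Fin (childSet c e).card) (y : ∀ i, X i) :
    Gm pa c f q e' ((ch c e k).val + 1) y = Gm pa c f q e' (ch c e k).val y := by
  unfold Gm
  apply Finset.sum_congr rfl
  intro u _
  congr 1
  apply Finset.prod_congr rfl
  intro i _
  refine if_congr ?_ rfl rfl
  constructor
  · rintro ⟨h1, h2⟩
    refine ⟨?_, h2⟩
    rcases Nat.lt_or_ge i.val (ch c e k).val with h | h
    · exact h
    · exfalso
      have : i = ch c e k := Fin.ext (by omega)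
      rw [this] at h2
      rw [c_ch c e k] at h2
      exact hne h2.symm
  · rintro ⟨h1, h2⟩
    exact ⟨by omega, h2⟩

lemma Pk_congr (e : E) (k' : ℕ) {y x : ∀ i, X i}
    (h : ∀ l : Fin (childSet c e).card, l.val < k' →
      (y (ch c e l) = x (ch c e l) ∧ ∀ j ∈ pa (ch c e l), y j = x j)) :
    Pk pa c f q e k' y = Pk pa c f q e k' x := by
  unfold Pk
  apply Finset.sum_congr rfl
  intro u _
  congr 1
  apply Finset.prod_congr rfl
  intro l _
  by_cases hl : l.val < k'
  · rw [if_pos hl, if_pos hl]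
    unfold indC
    rw [dif_pos (c_ch c e l), dif_pos (c_ch c e l)]
    exact ind_congr pa c f _ _ (h l hl).1 (h l hl).2
  · rw [if_neg hl, if_neg hl]

lemma Pk_zero (hq1 : ∀ e, ∑ u, q e u = 1) (e : E) (y : ∀ i, X i) :
    Pk pa c f q e 0 y = 1 := by
  unfold Pk
  have : ∀ u : U e, q e u * ∏ l : Fin (childSet c e).card,
      (if l.val < 0 then indC pa c f e (ch c e l) u y else 1) = q e u := by
    intro u
    rw [Finset.prod_eq_one (fun l _ => if_neg (Nat.not_lt_zero _)), mul_one]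
  simp_rw [this]
  exact hq1 e

lemma Jfun_nonneg (hq0 : ∀ e u, 0 ≤ q e u) (x : ∀ i, X i) (u : ∀ e, U e) :
    0 ≤ Jfun pa c f q x u := by
  unfold Jfun
  apply mul_nonneg
  · exact Finset.prod_nonneg (fun e _ => hq0 e (u e))
  · apply Finset.prod_nonneg
    intro i _
    split <;> norm_num

lemma Qfun_nonneg (hq0 : ∀ e u, 0 ≤ q e u) (x : ∀ i, X i) :
    0 ≤ Qfun pa c f q x :=
  Finset.sum_nonneg (fun u _ => Jfun_nonneg pa c f q hq0 x u)

lemma marg_restr_pos (hq0 : ∀ e u, 0 ≤ q e u) (hQpos : ∀ x, 0 < Qfun pa c f q x)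
    (S : Finset (Fin n)) (y : ∀ i, X i) :
    0 < marg (Qfun pa c f q) S (restr S y) := by
  unfold marg
  apply Finset.sum_pos'
  · intro x _
    split
    · exact Qfun_nonneg pa c f q hq0 x
    · exact le_refl 0
  · exact ⟨y, Finset.mem_univ y, by rw [if_pos rfl]; exact hQpos y⟩

lemma Gm_nonneg (hq0 : ∀ e u, 0 ≤ q e u) (e : E) (m : ℕ) (y : ∀ i, X i) :
    0 ≤ Gm pa c f q e m y := by
  unfold Gm
  apply Finset.sum_nonneg
  intro u _
  apply mul_nonneg (hq0 e u)
  apply Finset.prod_nonneg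
  intro i _
  unfold indC ind
  repeat' split
  all_goals norm_num

lemma Gm_pos (hpa : ∀ i, ∀ j ∈ pa i, j < i) (hq0 : ∀ e u, 0 ≤ q e u)
    (hQpos : ∀ x, 0 < Qfun pa c f q x) (e' : E) {m : ℕ} (hm : m ≤ n) (y : ∀ i, X i) :
    0 < Gm pa c f q e' m y := by
  have hpos : 0 < ∏ e, Gm pa c f q e m y := by
    rw [← SF_eq_prod_Gm, ← marg_Sfin pa c f q hpa m hm y]
    exact marg_restr_pos pa c f q hq0 hQpos _ y
  rcases lt_or_eq_of_le (Gm_nonneg pa c f q hq0 e' m y) with h | h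
  · exact h
  · exfalso
    rw [Finset.prod_eq_zero (Finset.mem_univ e') h.symm] at hpos
    exact lt_irrefl 0 hpos

end Main3

section Main4

variable {E : Type} [Fintype E] {X : Fin n → Type} {U : E → Type}
  [∀ i, Fintype (X i)] [∀ e, Fintype (U e)]
  (pa : Fin n → Finset (Fin n)) (c : Fin n → E)
  (f : ∀ i, U (c i) → (∀ j : pa i, X j) → X i) (q : ∀ e, U e → ℝ)

lemma ch_le_iff (e : E) (l k : Fin (childSet c e).card) :
    ch c e l ≤ ch c e k ↔ l ≤ k := by
  unfold ch
  exact OrderEmbedding.le_iff_le _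

lemma ch_mem_Tset (e : E) (k l : Fin (childSet c e).card) (hl : l < k) :
    ch c e l ∈ Tset pa c e k := by
  apply Finset.mem_union_left
  exact Finset.mem_image.2 ⟨l, Finset.mem_filter.2 ⟨Finset.mem_univ _, hl⟩, rfl⟩

lemma pa_subset_Tset (e : E) (k l : Fin (childSet c e).card) (hl : l ≤ k) :
    pa (ch c e l) ⊆ Tset pa c e k := by
  intro j hj
  apply Finset.mem_union_right
  exact Finset.mem_biUnion.2 ⟨l, Finset.mem_filter.2 ⟨Finset.mem_univ _, hl⟩, hj⟩

lemma Tset_subset_Sfin (hpa : ∀ i, ∀ j ∈ pa i, j < i) (e : E) (k : Fin (childSet c e).card) :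
    Tset pa c e k ⊆ Sfin (ch c e k).val := by
  intro j hj
  simp only [Sfin, Finset.mem_filter, Finset.mem_univ, true_and]
  rcases Finset.mem_union.1 hj with h | h
  · rcases Finset.mem_image.1 h with ⟨l, hl, rfl⟩
    have hl' : l < k := (Finset.mem_filter.1 hl).2
    exact (ch_lt_iff c e l k).2 hl'
  · rcases Finset.mem_biUnion.1 h with ⟨l, hl, hjl⟩
    have hl' : l ≤ k := (Finset.mem_filter.1 hl).2
    have h1 : j < ch c e l := hpa _ j hjl
    have h2 : ch c e l ≤ ch c e k := (ch_le_iff c e l k).2 hl'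
    exact lt_of_lt_of_le h1 h2

set_option maxHeartbeats 2000000 in
/-- Key lemma: the conditional marginal ratio equals the partial-mixture ratio. -/
lemma marg_insert_Tset (hpa : ∀ i, ∀ j ∈ pa i, j < i) (hq0 : ∀ e u, 0 ≤ q e u)
    (hQpos : ∀ x, 0 < Qfun pa c f q x) (e : E) (k : Fin (childSet c e).card) (x : ∀ i, X i) :
    marg (Qfun pa c f q) (insert (ch c e k) (Tset pa c e k))
        (restr (insert (ch c e k) (Tset pa c e k)) x)
      = (Pk pa c f q e (k.val + 1) x / Pk pa c f q e k.val x) *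
          marg (Qfun pa c f q) (Tset pa c e k) (restr (Tset pa c e k) x) := by
  set m : ℕ := (ch c e k).val with hmdef
  set T : Finset (Fin n) := Tset pa c e k with hTdef
  set A : Finset (Fin n) := insert (ch c e k) T with hAdef
  set S₁ : Finset (Fin n) := insert (ch c e k) (Sfin m) with hS₁def
  have hmn : m < n := (ch c e k).isLt
  have hTSm : T ⊆ Sfin m := Tset_subset_Sfin pa c hpa e k
  have hkS : ch c e k ∉ Sfin m := by simp [Sfin]; exact le_refl _
  have hins : (Sfin (m + 1) : Finset (Fin n)) = S₁ := by
    ext i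
    simp only [Sfin, Finset.mem_filter, Finset.mem_univ, true_and, hS₁def,
      Finset.mem_insert, Fin.ext_iff]
    omega
  have hsub : Sfin m ⊆ S₁ := Finset.subset_insert _ _
  have hAS : A ⊆ S₁ := Finset.insert_subset_insert _ hTSm
  have hmarg1 : ∀ y : ∀ i, X i, marg (Qfun pa c f q) S₁ (restr S₁ y) = SF pa c f q (m + 1) y := by
    intro y
    have := marg_Sfin pa c f q hpa (m + 1) (by omega) y
    rwa [hins] at this
  have hPkpos : 0 < Pk pa c f q e k.val x := by
    have := Gm_pos pa c f q hpa hq0 hQpos e (le_of_lt hmn) x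
    rwa [Gm_eq_Pk pa c f q e m k.val (cond_iff_lt c e k) x] at this
  -- the coefficient
  set ρ : ℝ := Pk pa c f q e (k.val + 1) x / Pk pa c f q e k.val x with hρdef
  rw [marg_group hAS (Qfun pa c f q) (restr A x)]
  have hterm : ∀ w : ∀ j : S₁, X j,
      (if restr2 hAS w = restr A x then marg (Qfun pa c f q) S₁ w else 0)
      = ρ * (if w ⟨ch c e k, Finset.mem_insert_self _ _⟩ = x (ch c e k) ∧
              restr2 hTSm (restr2 hsub w) = restr T x
            then marg (Qfun pa c f q) (Sfin m) (restr2 hsub w) else 0) := by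
    intro w
    have hiff : (restr2 hAS w = restr A x) ↔
        (w ⟨ch c e k, Finset.mem_insert_self _ _⟩ = x (ch c e k) ∧
          restr2 hTSm (restr2 hsub w) = restr T x) := by
      constructor
      · intro h
        constructor
        · exact congrFun h ⟨ch c e k, Finset.mem_insert_self _ _⟩
        · funext j
          exact congrFun h ⟨(j : Fin n), Finset.mem_insert_of_mem j.2⟩
      · rintro ⟨h1, h2⟩
        funext j
        rcases Finset.mem_insert.1 j.2 with hj | hj
        · obtain ⟨jv, hjm⟩ := j
          show w ⟨jv, hAS hjm⟩ = x jv
          simp only at hj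
          subst hj
          exact h1
        · exact congrFun h2 ⟨(j : Fin n), hj⟩
    by_cases hc : restr2 hAS w = restr A x
    · rw [if_pos hc, if_pos (hiff.1 hc)]
      -- compute the marginal
      set y : ∀ i, X i := extOn S₁ w x with hydef
      have hagree : ∀ i ∈ A, y i = x i := by
        intro i hi
        show extOn S₁ w x i = x i
        unfold extOn
        rw [dif_pos (hAS hi)]
        exact congrFun hc ⟨i, hi⟩
      have hPc : ∀ k' : ℕ, k' ≤ k.val + 1 →
          Pk pa c f q e k' y = Pk pa c f q e k' x := by
        intro k' hk'
        apply Pk_congr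
        intro l hl
        constructor
        · apply hagree
          rcases Nat.lt_or_ge l.val k.val with h | h
          · exact Finset.mem_insert_of_mem (ch_mem_Tset pa c e k l h)
          · have : l = k := Fin.ext (by omega)
            rw [this]
            exact Finset.mem_insert_self _ _
        · intro j hj
          apply hagree
          apply Finset.mem_insert_of_mem
          refine pa_subset_Tset pa c e k l ?_ hj
          have : l.val ≤ k.val := by omega
          exact this
      have key : (∏ e', Gm pa c f q e' (m + 1) y) = ρ * ∏ e', Gm pa c f q e' m y := by
        rw [← Finset.mul_prod_erase univ _ (Finset.mem_univ e),
            ← Finset.mul_prod_erase univ (fun e' => Gm pa c f q e' m y) (Finset.mem_univ e)]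
        have herase : (∏ e' ∈ univ.erase e, Gm pa c f q e' (m + 1) y)
            = ∏ e' ∈ univ.erase e, Gm pa c f q e' m y := by
          apply Finset.prod_congr rfl
          intro e' he'
          exact Gm_succ_ne pa c f q e' e (Finset.mem_erase.1 he').1 k y
        rw [herase]
        rw [Gm_eq_Pk pa c f q e (m + 1) (k.val + 1) (cond_iff_le c e k) y,
            Gm_eq_Pk pa c f q e m k.val (cond_iff_lt c e k) y,
            hPc (k.val + 1) (le_refl _), hPc k.val (by omega), hρdef]
        field_simp
      have hr2 : restr (Sfin m) y = restr2 hsub w := by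
        funext j
        show extOn S₁ w x (j : Fin n) = w ⟨(j : Fin n), hsub j.2⟩
        unfold extOn
        rw [dif_pos (hsub j.2)]
      calc marg (Qfun pa c f q) S₁ w
          = marg (Qfun pa c f q) S₁ (restr S₁ y) := by rw [restr_extOn]
        _ = SF pa c f q (m + 1) y := hmarg1 y
        _ = ∏ e', Gm pa c f q e' (m + 1) y := SF_eq_prod_Gm pa c f q _ y
        _ = ρ * ∏ e', Gm pa c f q e' m y := key
        _ = ρ * SF pa c f q m y := by rw [SF_eq_prod_Gm]
        _ = ρ * marg (Qfun pa c f q) (Sfin m) (restr (Sfin m) y) := by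
            rw [marg_Sfin pa c f q hpa m (by omega) y]
        _ = ρ * marg (Qfun pa c f q) (Sfin m) (restr2 hsub w) := by rw [hr2]
    · rw [if_neg hc, if_neg (fun h => hc (hiff.2 h)), mul_zero]
  rw [Finset.sum_congr rfl (fun w _ => hterm w), ← Finset.mul_sum]
  congr 1
  simp_rw [ite_and]
  rw [sum_pin hkS (x (ch c e k))
    (fun w' => if restr2 hTSm w' = restr T x then marg (Qfun pa c f q) (Sfin m) w' else 0)]
  exact (marg_group hTSm (Qfun pa c f q) (restr T x)).symm

end Main4

lemma prod_ratio_telescope (a : ℕ → ℝ) (M : ℕ) (h0 : a 0 = 1) (ha : ∀ j < M, a j ≠ 0) :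
    (∏ j ∈ Finset.range M, (a (j + 1) / a j)) = a M := by
  induction M with
  | zero => simp [h0]
  | succ M ih =>
    rw [Finset.prod_range_succ, ih (fun j hj => ha j (by omega)),
      mul_comm, div_mul_cancel₀ _ (ha M (by omega))]

section Main5

variable {E : Type} [Fintype E] {X : Fin n → Type} {U : E → Type}
  [∀ i, Fintype (X i)] [∀ e, Fintype (U e)]
  (pa : Fin n → Finset (Fin n)) (c : Fin n → E)
  (f : ∀ i, U (c i) → (∀ j : pa i, X j) → X i) (q : ∀ e, U e → ℝ)

lemma cpr_num (R : (∀ i, X i) → ℝ) (i : Fin n) (T : Finset (Fin n)) (x₀ : ∀ i, X i) :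
    (∑ x : ∀ i, X i, if x i = x₀ i ∧ restr T x = restr T x₀ then R x else 0)
      = marg R (insert i T) (restr (insert i T) x₀) := by
  unfold marg
  apply Finset.sum_congr rfl
  intro x _
  refine if_congr ?_ rfl rfl
  rw [restr_eq_iff, restr_eq_iff, Finset.forall_mem_insert]

end Main5


set_option maxHeartbeats 2000000

/-- in a quasi-Markovian PSCM with strictly positive induced distribution,
the mixture over an exogenous variable of the product of its children's structural-equation
CPTs equals the chain-rule product of conditionals of the induced endogenous distribution. -/
theorem mixture_eq_chain_rule_product
    {E : Type} [Fintype E] (X : Fin n → Type) (U : E → Type)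
    [∀ i, Fintype (X i)] [∀ i, Nonempty (X i)]
    [∀ e, Fintype (U e)] [∀ e, Nonempty (U e)]
    (pa : Fin n → Finset (Fin n)) (hpa : ∀ i, ∀ j ∈ pa i, j < i)
    (c : Fin n → E)
    (f : ∀ i, U (c i) → (∀ j : pa i, X j) → X i)
    (q : ∀ e, U e → ℝ) (hq0 : ∀ e u, 0 ≤ q e u) (hq1 : ∀ e, ∑ u, q e u = 1)
    (hQpos : ∀ x, 0 < Qfun pa c f q x)
    (e : E) (v : ∀ j : Wset pa c e, X j) :
    (∑ u : U e, q e u * ∏ k : Fin (childSet c e).card,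
        (if f (ch c e k) (uCast U c e k u) (restr2 (pa_subset_W pa c e k) v)
            = v ⟨ch c e k, ch_mem_W pa c e k⟩ then (1 : ℝ) else 0))
      = ∏ k : Fin (childSet c e).card,
          cpr (Qfun pa c f q) (ch c e k) (Tset pa c e k)
            (v ⟨ch c e k, ch_mem_W pa c e k⟩)
            (restr2 (T_subset_W pa c e k) v) := by
  classical
  set x₀ : ∀ i, X i := extOn (Wset pa c e) v (fun i => Classical.arbitrary (X i)) with hx₀
  have hv : v = restr (Wset pa c e) x₀ := (restr_extOn _ _ _).symm
  rw [hv]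
  have hL : (∑ u : U e, q e u * ∏ k : Fin (childSet c e).card,
      (if f (ch c e k) (uCast U c e k u)
            (restr2 (pa_subset_W pa c e k) (restr (Wset pa c e) x₀))
          = restr (Wset pa c e) x₀ ⟨ch c e k, ch_mem_W pa c e k⟩ then (1 : ℝ) else 0))
      = Pk pa c f q e (childSet c e).card x₀ := by
    unfold Pk
    apply Finset.sum_congr rfl
    intro u _
    congr 1
    apply Finset.prod_congr rfl
    intro l _
    rw [if_pos (l.isLt : l.val < (childSet c e).card)]
    unfold indC ind
    rw [dif_pos (c_ch c e l)]
    rfl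
  have hR : ∀ l : Fin (childSet c e).card,
      cpr (Qfun pa c f q) (ch c e l) (Tset pa c e l)
        (restr (Wset pa c e) x₀ ⟨ch c e l, ch_mem_W pa c e l⟩)
        (restr2 (T_subset_W pa c e l) (restr (Wset pa c e) x₀))
      = Pk pa c f q e (l.val + 1) x₀ / Pk pa c f q e l.val x₀ := by
    intro l
    show cpr (Qfun pa c f q) (ch c e l) (Tset pa c e l)
        (x₀ (ch c e l)) (restr (Tset pa c e l) x₀) = _
    unfold cpr
    rw [cpr_num (Qfun pa c f q) (ch c e l) (Tset pa c e l) x₀]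
    rw [marg_insert_Tset pa c f q hpa hq0 hQpos e l x₀]
    rw [mul_div_assoc, div_self (ne_of_gt
      (marg_restr_pos pa c f q hq0 hQpos (Tset pa c e l) x₀)), mul_one]
  rw [hL, Finset.prod_congr rfl (fun l _ => hR l)]
  rw [Fin.prod_univ_eq_prod_range
    (fun j => Pk pa c f q e (j + 1) x₀ / Pk pa c f q e j x₀) (childSet c e).card]
  refine (prod_ratio_telescope (fun j => Pk pa c f q e j x₀) (childSet c e).card
    (Pk_zero pa c f q hq1 e x₀) ?_).symm
  intro j hj
  have hpos := Gm_pos pa c f q hpa hq0 hQpos e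
    (le_of_lt (ch c e ⟨j, hj⟩).isLt) x₀
  rw [Gm_eq_Pk pa c f q e _ _ (cond_iff_lt c e ⟨j, hj⟩) x₀] at hpos
  exact ne_of_gt hpos
end
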